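/- For space-time separable functions y_d(t,x) = χ(t)φ(x) and v_d(t,x) = ξ(t)ψ(x) in W(0,T), with φ,ψ ∈ V and χ,ξ sufficiently smooth scalar functions on [0,T], the bilinear form admits the representation b(y_d, v_d) = χ(T)ξ(T)(φ,ψ)_H + ∫₀ᵀ χ̇(t)ξ̇(t) dt · (φ, Rψ)_H + ∫₀ᵀ χ(t)ξ(t) dt · (φ,ψ)_V. -/

import Mathlib

/-!
Abstract setup for the least-squares space-time formulation of the abstract
parabolic (heat) equation, following Hinze–Kahle.

* `V, H` are separable real Hilbert spaces forming a Gelfand triple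
  `V ↪ H ≡ H* ↪ V*` via the embedding `ι : V →L[ℝ] H`.
* `A : V → V*` is linear, bounded, selfadjoint, coercive and boundedly
  invertible with inverse the Riesz lift `R : V* → V`, i.e.
  `⟨l,v⟩_{V*,V} = (R l, v)_V`.  The dual inner product is
  `(l,k)_{V*} = (R l, R k)_V`.
* `W` is the space `W(0,T) = {v ∈ L²(0,T;V) : vₜ ∈ L²(0,T;V*)}`; an element
  `w : W` has an `L²(0,T;V)`-representative `val w : ℝ → V` (whose composition
  with `ι` is the continuous `H`-valued representative) and a weak time
  derivative `dt w : ℝ → V*`.  The `W(0,T)`-inner product is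
  `(u,w) = ∫₀ᵀ (uₜ,wₜ)_{V*} + ∫₀ᵀ (u,w)_V`, the embedding
  `W(0,T) ↪ C([0,T];H)` is continuous, and the fundamental
  integration-by-parts identity
  `‖w(T)‖²_H - ‖w(0)‖²_H = 2∫₀ᵀ ⟨wₜ,w⟩` holds.
-/

open MeasureTheory
open scoped RealInnerProductSpace

noncomputable section

structure SpaceTimeSetup (V H W : Type*)
    [NormedAddCommGroup V] [InnerProductSpace ℝ V] [CompleteSpace V]
    [NormedAddCommGroup H] [InnerProductSpace ℝ H] [CompleteSpace H]
    [NormedAddCommGroup W] [InnerProductSpace ℝ W] [CompleteSpace W] where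
  /-- the final time `T > 0` -/
  T : ℝ
  T_pos : 0 < T
  /-- the embedding `V ↪ H` of the Gelfand triple -/
  ι : V →L[ℝ] H
  ι_inj : Function.Injective ι
  /-- the operator `A : V → V*` -/
  A : V →L[ℝ] StrongDual ℝ V
  /-- the Riesz lift `R = A⁻¹ : V* → V` -/
  R : StrongDual ℝ V →L[ℝ] V
  /-- `⟨l,v⟩_{V*,V} = (R l, v)_V` -/
  riesz : ∀ (l : StrongDual ℝ V) (v : V), l v = ⟪R l, v⟫
  R_A : ∀ v : V, R (A v) = v
  A_R : ∀ l : StrongDual ℝ V, A (R l) = l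
  /-- the `L²(0,T;V)`-representative of an element of `W(0,T)` -/
  val : W →ₗ[ℝ] (ℝ → V)
  /-- the weak time derivative, an element of `L²(0,T;V*)` -/
  dt : W →ₗ[ℝ] (ℝ → StrongDual ℝ V)
  int_val : ∀ u w : W, IntervalIntegrable (fun t => ⟪val u t, val w t⟫) volume 0 T
  int_dt : ∀ u w : W,
    IntervalIntegrable (fun t => ⟪R (dt u t), R (dt w t)⟫) volume 0 T
  int_mix : ∀ u w : W, IntervalIntegrable (fun t => dt u t (val w t)) volume 0 T
  /-- the canonical inner product of `W(0,T)` -/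
  inner_def : ∀ u w : W, ⟪u, w⟫ =
    (∫ t in (0:ℝ)..T, ⟪R (dt u t), R (dt w t)⟫) +
      ∫ t in (0:ℝ)..T, ⟪val u t, val w t⟫
  /-- the continuous embedding `W(0,T) ↪ C([0,T];H)` -/
  emb : ∃ C > 0, ∀ (w : W) (t : ℝ), t ∈ Set.Icc 0 T → ‖ι (val w t)‖ ≤ C * ‖w‖
  /-- `‖w(T)‖²_H - ‖w(0)‖²_H = 2 ∫₀ᵀ ⟨wₜ, w⟩_{V*,V}` -/
  ftc : ∀ w : W, ‖ι (val w T)‖ ^ 2 - ‖ι (val w 0)‖ ^ 2 =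
    2 * ∫ t in (0:ℝ)..T, dt w t (val w t)

variable {V H W : Type*}
    [NormedAddCommGroup V] [InnerProductSpace ℝ V] [CompleteSpace V]
    [NormedAddCommGroup H] [InnerProductSpace ℝ H] [CompleteSpace H]
    [NormedAddCommGroup W] [InnerProductSpace ℝ W] [CompleteSpace W]

/-- the least-squares bilinear form
`b(v,w) = ∫₀ᵀ (vₜ + A v, wₜ + A w)_{V*} + (v(0), w(0))_H` -/
def SpaceTimeSetup.b (S : SpaceTimeSetup V H W) (v w : W) : ℝ :=
  (∫ t in (0:ℝ)..S.T,
      ⟪S.R (S.dt v t + S.A (S.val v t)), S.R (S.dt w t + S.A (S.val w t))⟫) +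
    ⟪S.ι (S.val v 0), S.ι (S.val w 0)⟫

/-- the right-hand side linear form
`l(v) = ∫₀ᵀ (f, vₜ + A v)_{V*} + (y₀, v(0))_H` -/
def SpaceTimeSetup.lform (S : SpaceTimeSetup V H W)
    (f : ℝ → StrongDual ℝ V) (y₀ : H) (v : W) : ℝ :=
  (∫ t in (0:ℝ)..S.T, ⟪S.R (f t), S.R (S.dt v t + S.A (S.val v t))⟫) +
    ⟪y₀, S.ι (S.val v 0)⟫

/-- for space-time separable functions
`y_d(t) = χ(t) φ` and `v_d(t) = ξ(t) ψ` in `W(0,T)` (with `φ, ψ ∈ V` and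
`χ, ξ` smooth scalar functions, so that the weak time derivatives are
`χ̇(t) φ` resp. `ξ̇(t) ψ`, regarded as elements of `V*` through the Gelfand
triple embedding `⟨φ, ·⟩ = (φ, ·)_H`), the bilinear form satisfies
`b(y_d, v_d) = χ(T) ξ(T) (φ,ψ)_H + (∫₀ᵀ χ̇ ξ̇) (φ, R ψ)_H + (∫₀ᵀ χ ξ) (φ,ψ)_V`. -/
theorem b_separable_representation (S : SpaceTimeSetup V H W)
    (φ ψ : V) (χ ξ χd ξd : ℝ → ℝ)
    (hχ : ∀ t, HasDerivAt χ (χd t) t) (hξ : ∀ t, HasDerivAt ξ (ξd t) t)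
    (hχc : Continuous χ) (hξc : Continuous ξ)
    (hχdc : Continuous χd) (hξdc : Continuous ξd)
    (jφ jψ : StrongDual ℝ V)
    (hjφ : ∀ w : V, jφ w = ⟪S.ι φ, S.ι w⟫)
    (hjψ : ∀ w : V, jψ w = ⟪S.ι ψ, S.ι w⟫)
    (yd vd : W)
    (hyval : ∀ t, S.val yd t = χ t • φ) (hydt : ∀ t, S.dt yd t = χd t • jφ)
    (hvval : ∀ t, S.val vd t = ξ t • ψ) (hvdt : ∀ t, S.dt vd t = ξd t • jψ) :
    S.b yd vd = χ S.T * ξ S.T * ⟪S.ι φ, S.ι ψ⟫ +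
      (∫ t in (0:ℝ)..S.T, χd t * ξd t) * ⟪S.ι φ, S.ι (S.R jψ)⟫ +
      (∫ t in (0:ℝ)..S.T, χ t * ξ t) * ⟪φ, ψ⟫ := by

  have hc1 : ⟪S.R jφ, S.R jψ⟫ = ⟪S.ι φ, S.ι (S.R jψ)⟫ := by
    rw [← S.riesz, hjφ]
  have hc2 : ⟪S.R jφ, ψ⟫ = ⟪S.ι φ, S.ι ψ⟫ := by rw [← S.riesz, hjφ]
  have hc2' : ⟪φ, S.R jψ⟫ = ⟪S.ι φ, S.ι ψ⟫ := by
    rw [real_inner_comm, ← S.riesz, hjψ, real_inner_comm]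
  have hint : ∀ t : ℝ,
      ⟪S.R (S.dt yd t + S.A (S.val yd t)), S.R (S.dt vd t + S.A (S.val vd t))⟫
      = χd t * ξd t * ⟪S.ι φ, S.ι (S.R jψ)⟫
        + (χd t * ξ t + χ t * ξd t) * ⟪S.ι φ, S.ι ψ⟫
        + χ t * ξ t * ⟪φ, ψ⟫ := by
    intro t
    simp only [hyval, hydt, hvval, hvdt, _root_.map_smul, map_add, S.R_A,
      inner_add_left, inner_add_right, real_inner_smul_left,
      real_inner_smul_right, hc1, hc2, hc2']
    ring
  have h0 : (⟪S.ι (S.val yd 0), S.ι (S.val vd 0)⟫ : ℝ)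
      = χ 0 * ξ 0 * ⟪S.ι φ, S.ι ψ⟫ := by
    rw [hyval, hvval, _root_.map_smul, _root_.map_smul, real_inner_smul_left,
      real_inner_smul_right]
    ring
  have i1 : IntervalIntegrable (fun t => χd t * ξd t * ⟪S.ι φ, S.ι (S.R jψ)⟫)
      MeasureTheory.volume 0 S.T :=
    (((hχdc.mul hξdc).mul continuous_const).intervalIntegrable _ _)
  have i2 : IntervalIntegrable (fun t => (χd t * ξ t + χ t * ξd t) * ⟪S.ι φ, S.ι ψ⟫)
      MeasureTheory.volume 0 S.T :=
    ((((hχdc.mul hξc).add (hχc.mul hξdc)).mul continuous_const).intervalIntegrable _ _)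
  have i3 : IntervalIntegrable (fun t => χ t * ξ t * ⟪φ, ψ⟫)
      MeasureTheory.volume 0 S.T :=
    (((hχc.mul hξc).mul continuous_const).intervalIntegrable _ _)
  have hmid : (∫ t in (0:ℝ)..S.T, (χd t * ξ t + χ t * ξd t))
      = χ S.T * ξ S.T - χ 0 * ξ 0 := by
    have hd : ∀ t ∈ Set.uIcc (0:ℝ) S.T,
        HasDerivAt (fun t => χ t * ξ t) (χd t * ξ t + χ t * ξd t) t := by
      intro t _
      exact (hχ t).mul (hξ t)
    exact intervalIntegral.integral_eq_sub_of_hasDerivAt hd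
      (((hχdc.mul hξc).add (hχc.mul hξdc)).intervalIntegrable _ _)
  unfold SpaceTimeSetup.b
  rw [intervalIntegral.integral_congr (g := fun t =>
      χd t * ξd t * ⟪S.ι φ, S.ι (S.R jψ)⟫
        + (χd t * ξ t + χ t * ξd t) * ⟪S.ι φ, S.ι ψ⟫
        + χ t * ξ t * ⟪φ, ψ⟫) (fun t _ => hint t),
    intervalIntegral.integral_add (i1.add i2) i3,
    intervalIntegral.integral_add i1 i2,
    intervalIntegral.integral_mul_const, intervalIntegral.integral_mul_const,
    intervalIntegral.integral_mul_const, hmid, h0]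
  ring
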